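/- In any ordered field F, the Mean Value Theorem implies the Least Upper Bound Property: if for all a < b and all f : F → F continuous on [a,b] and differentiable on (a,b) there exists c ∈ (a,b) with f(b) − f(a) = f'(c)(b−a), then every nonempty subset of F bounded above has a least upper bound. -/

import Mathlib

open Filter Topology

/-- The derivative of `f : F → F` at `a` in the order topology. -/
def HasDerivO {F : Type*} [Field F] [LinearOrder F] [IsStrictOrderedRing F] [TopologicalSpace F]
    (f : F → F) (L a : F) : Prop :=
  Tendsto (fun x => (f x - f a) / (x - a)) (𝓝[≠] a) (𝓝 L)

/-- In any ordered field, the Mean Value Theorem implies the Least Upper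
Bound Property. -/
theorem stmt_4 {F : Type*} [Field F] [LinearOrder F] [IsStrictOrderedRing F] [TopologicalSpace F] [OrderTopology F]
    (hMVT : ∀ (f f' : F → F) (a b : F), a < b → ContinuousOn f (Set.Icc a b) →
      (∀ x ∈ Set.Ioo a b, HasDerivO f (f' x) x) →
      ∃ c ∈ Set.Ioo a b, f b - f a = f' c * (b - a)) :
    ∀ A : Set F, A.Nonempty → BddAbove A → ∃ s, IsLUB A s := by
  intro A hne hbdd
  classical
  by_contra hno
  push_neg at hno
  -- the function: 0 on upper bounds, 1 elsewhere
  set f : F → F := fun x => if x ∈ upperBounds A then 0 else 1 with hf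
  -- locally constant
  have hloc : ∀ x : F, ∀ᶠ y in 𝓝 x, f y = f x := by
    intro x
    by_cases hx : x ∈ upperBounds A
    · -- x is an upper bound but not the least, so some smaller upper bound exists
      have : ¬ x ∈ lowerBounds (upperBounds A) := fun h => hno x ⟨hx, h⟩
      simp only [lowerBounds, Set.mem_setOf_eq] at this
      push_neg at this
      obtain ⟨b', hb', hlt⟩ := this
      have hlt' : b' < x := hlt
      have hsub : Set.Ioi b' ⊆ {y | f y = f x} := by
        intro y hy
        have : y ∈ upperBounds A := upperBounds_mono_mem (le_of_lt hy) hb'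
        simp [hf, this, hx]
      exact Filter.mem_of_superset (Ioi_mem_nhds hlt') hsub
    · obtain ⟨a, ha, hlt⟩ : ∃ a ∈ A, x < a := by
        simp only [upperBounds, Set.mem_setOf_eq] at hx
        push_neg at hx
        obtain ⟨a, ha, h⟩ := hx
        exact ⟨a, ha, h⟩
      have hsub : Set.Iio a ⊆ {y | f y = f x} := by
        intro y hy
        have : ¬ y ∈ upperBounds A := fun h => absurd (h ha) (not_le.mpr hy)
        simp [hf, this, hx]
      exact Filter.mem_of_superset (Iio_mem_nhds hlt) hsub
  have hcont : Continuous f := by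
    refine continuous_iff_continuousAt.mpr fun x => ?_
    exact Filter.EventuallyEq.continuousAt (hloc x)
  have hderiv : ∀ x : F, HasDerivO f 0 x := by
    intro x
    have h0 : (fun y => (f y - f x) / (y - x)) =ᶠ[𝓝[≠] x] fun _ => (0 : F) := by
      filter_upwards [nhdsWithin_le_nhds (hloc x)] with y hy
      simp [hy]
    exact (Filter.tendsto_congr' h0).mpr tendsto_const_nhds
  -- pick a ∈ A and an upper bound b
  obtain ⟨a, ha⟩ := hne
  obtain ⟨b, hb⟩ := hbdd
  have haU : ¬ a ∈ upperBounds A := by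
    intro h
    exact hno a ⟨h, fun y hy => hy ha⟩
  have hab : a < b := lt_of_le_of_ne (hb ha) (by rintro rfl; exact haU hb)
  obtain ⟨c, _, hc⟩ := hMVT f (fun _ => 0) a b hab hcont.continuousOn
    (fun x _ => hderiv x)
  have : f b - f a = 0 := by rw [hc]; ring
  rw [hf] at this
  simp only [if_pos hb, if_neg haU] at this
  norm_num at this
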